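/- Let d be a positive integer and let p be a real number with p > 4. Then for all x, y ∈ ℝ^d, the following second-order Taylor identity with integral remainder holds for the function z ↦ ‖z‖^p: ‖x‖^p − ‖y‖^p − p‖y‖^{p−2}⟨y, x − y⟩ = p(p−2) ∫₀¹ (1−θ)‖y + θ(x − y)‖^{p−4} ⟨y + θ(x − y), x − y⟩² dθ + p‖x − y‖² ∫₀¹ (1−θ)‖y + θ(x − y)‖^{p−2} dθ. (The key identity established in the proof of Lemma 3.2.) -/

import Mathlib

open scoped RealInnerProductSpace

/-- The key second-order Taylor identity with integral remainder for `z ↦ ‖z‖^p`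
(established in the proof of Lemma 3.2): for `p > 4` and `x, y ∈ ℝ^d`,
`‖x‖^p − ‖y‖^p − p‖y‖^{p−2}⟨y, x − y⟩
  = p(p−2) ∫₀¹ (1−θ)‖y + θ(x − y)‖^{p−4} ⟨y + θ(x − y), x − y⟩² dθ
    + p‖x − y‖² ∫₀¹ (1−θ)‖y + θ(x − y)‖^{p−2} dθ`. -/
theorem norm_rpow_taylor_identity (d : ℕ) (hd : 0 < d) (p : ℝ) (hp : 4 < p)
    (x y : EuclideanSpace ℝ (Fin d)) :
    ‖x‖ ^ p - ‖y‖ ^ p - p * ‖y‖ ^ (p - 2) * ⟪y, x - y⟫ =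
      p * (p - 2) *
        (∫ θ in (0:ℝ)..1,
          (1 - θ) * ‖y + θ • (x - y)‖ ^ (p - 4) * ⟪y + θ • (x - y), x - y⟫ ^ 2)
      + p * ‖x - y‖ ^ 2 *
        ∫ θ in (0:ℝ)..1, (1 - θ) * ‖y + θ • (x - y)‖ ^ (p - 2) := by
  set v := x - y with hv
  set a : ℝ := ‖y‖^2 with ha
  set b : ℝ := ⟪y, v⟫ with hb
  set c : ℝ := ‖v‖^2 with hc
  set h : ℝ → ℝ := fun θ => a + 2*b*θ + c*θ^2 with hh
  have key1 : ∀ θ : ℝ, h θ = ‖y + θ • v‖^2 := by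
    intro θ
    rw [hh]
    simp only
    rw [norm_add_sq_real, real_inner_smul_right, norm_smul, mul_pow, Real.norm_eq_abs, sq_abs,
      ha, hb, hc]
    ring
  have key2 : ∀ θ : ℝ, (⟪y + θ • v, v⟫ : ℝ) = b + c*θ := by
    intro θ
    rw [inner_add_left, real_inner_smul_left, hb, hc, real_inner_self_eq_norm_sq]
    ring
  have hconv : ∀ (θ r : ℝ), h θ ^ r = ‖y + θ • v‖ ^ (2*r) := by
    intro θ r
    rw [key1, ← Real.rpow_natCast ‖y + θ • v‖ 2, ← Real.rpow_mul (norm_nonneg _)]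
    norm_num
  have hderivh : ∀ θ : ℝ, HasDerivAt h (2*b + 2*c*θ) θ := by
    intro θ
    have h1 : HasDerivAt (fun t : ℝ => a + 2*b*t + c*t^2)
        (0 + 2*b*1 + c*(2*θ^1)) θ := by
      exact ((hasDerivAt_const θ a).add ((hasDerivAt_id θ).const_mul (2*b))).add
        ((hasDerivAt_pow 2 θ).const_mul c)
    convert h1 using 1
    ring
  set g : ℝ → ℝ := fun θ => h θ ^ (p/2) with hg'
  set g1 : ℝ → ℝ := fun θ => p * h θ ^ (p/2 - 1) * (b + c*θ) with hg1'
  set g2 : ℝ → ℝ := fun θ =>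
    p*(p-2) * h θ ^ (p/2 - 2) * (b + c*θ)^2 + p*c* h θ ^ (p/2 - 1) with hg2'
  have hg : ∀ θ : ℝ, HasDerivAt g (g1 θ) θ := by
    intro θ
    have h1 : HasDerivAt (fun t : ℝ => t ^ (p/2)) (p/2 * h θ ^ (p/2 - 1)) (h θ) :=
      Real.hasDerivAt_rpow_const (Or.inr (by linarith))
    have := h1.comp θ (hderivh θ)
    refine this.congr_deriv ?_
    simp only [hg1']
    ring
  have hg1 : ∀ θ : ℝ, HasDerivAt g1 (g2 θ) θ := by
    intro θ
    have h1 : HasDerivAt (fun t : ℝ => t ^ (p/2 - 1)) ((p/2-1) * h θ ^ (p/2 - 1 - 1)) (h θ) :=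
      Real.hasDerivAt_rpow_const (Or.inr (by linarith))
    have h2 := h1.comp θ (hderivh θ)
    have h3 : HasDerivAt (fun θ : ℝ => b + c*θ) c θ := by
      exact ((hasDerivAt_const θ b).add ((hasDerivAt_id θ).const_mul c)).congr_deriv (by ring)
    have h4 := (h2.const_mul p).mul h3
    refine h4.congr_deriv ?_
    simp only [hg2', Function.comp]
    rw [show p/2 - 1 - 1 = p/2 - 2 by ring]
    ring
  have hcont : Continuous h := by fun_prop
  have hcr : ∀ r : ℝ, 0 < r → Continuous fun θ => h θ ^ r := by
    intro r hr
    rw [continuous_iff_continuousAt]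
    intro θ
    exact (Real.continuousAt_rpow_const _ _ (Or.inr hr.le)).comp hcont.continuousAt
  have hcg1 : Continuous g1 := by
    rw [hg1']
    exact ((continuous_const.mul (hcr _ (by linarith))).mul (by fun_prop))
  have hcg2 : Continuous g2 := by
    rw [hg2']
    exact (((continuous_const.mul (hcr _ (by linarith))).mul (by fun_prop)).add
      (continuous_const.mul (hcr _ (by linarith))))
  have ftc : ∫ θ in (0:ℝ)..1, g1 θ = g 1 - g 0 :=
    intervalIntegral.integral_eq_sub_of_hasDerivAt (fun θ _ => hg θ)
      (hcg1.intervalIntegrable 0 1)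
  have parts : ∫ θ in (0:ℝ)..1, (1-θ) * g2 θ = g 1 - g 0 - g1 0 := by
    have hu : ∀ θ ∈ Set.uIcc (0:ℝ) 1, HasDerivAt (fun t : ℝ => 1 - t) (-1) θ := by
      intro θ _
      simpa using (hasDerivAt_id θ).const_sub 1
    have := intervalIntegral.integral_mul_deriv_eq_deriv_mul hu
      (fun θ _ => hg1 θ) (continuous_const.intervalIntegrable _ _)
      (hcg2.intervalIntegrable 0 1)
    rw [this]
    simp only [neg_one_mul]
    rw [intervalIntegral.integral_neg, ftc]
    ring
  -- rewrite the target integrands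
  have e1 : (∫ θ in (0:ℝ)..1,
      (1 - θ) * ‖y + θ • v‖ ^ (p - 4) * ⟪y + θ • v, v⟫ ^ 2) =
      ∫ θ in (0:ℝ)..1, (1 - θ) * h θ ^ (p/2 - 2) * (b + c*θ)^2 := by
    apply intervalIntegral.integral_congr
    intro θ _
    dsimp only
    rw [key2, show p - 4 = 2*(p/2-2) by ring, ← hconv]
  have e2 : (∫ θ in (0:ℝ)..1, (1 - θ) * ‖y + θ • v‖ ^ (p - 2)) =
      ∫ θ in (0:ℝ)..1, (1 - θ) * h θ ^ (p/2 - 1) := by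
    apply intervalIntegral.integral_congr
    intro θ _
    dsimp only
    rw [show p - 2 = 2*(p/2-1) by ring, ← hconv]
  have int1 : IntervalIntegrable (fun θ : ℝ => (1 - θ) * h θ ^ (p/2 - 2) * (b + c*θ)^2)
      MeasureTheory.volume 0 1 :=
    (((continuous_const.sub continuous_id).mul (hcr _ (by linarith))).mul
      (by fun_prop)).intervalIntegrable _ _
  have int2 : IntervalIntegrable (fun θ : ℝ => (1 - θ) * h θ ^ (p/2 - 1))
      MeasureTheory.volume 0 1 :=
    ((continuous_const.sub continuous_id).mul (hcr _ (by linarith))).intervalIntegrable _ _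
  rw [e1, e2, ← intervalIntegral.integral_const_mul, ← intervalIntegral.integral_const_mul,
    ← intervalIntegral.integral_add (int1.const_mul _) (int2.const_mul _)]
  have ecomb : (∫ θ in (0:ℝ)..1,
      (p*(p-2) * ((1 - θ) * h θ ^ (p/2 - 2) * (b + c*θ)^2) +
        p*c * ((1 - θ) * h θ ^ (p/2 - 1)))) = ∫ θ in (0:ℝ)..1, (1-θ) * g2 θ := by
    apply intervalIntegral.integral_congr
    intro θ _
    simp only [hg2']
    ring
  rw [ecomb, parts]
  -- finally identify g 1, g 0, g1 0
  have hg1v : g 1 = ‖x‖ ^ p := by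
    rw [hg']
    simp only
    rw [hconv 1 (p/2), show 2*(p/2) = p by ring]
    simp [hv]
  have hg0v : g 0 = ‖y‖ ^ p := by
    rw [hg']
    simp only
    rw [hconv 0 (p/2), show 2*(p/2) = p by ring]
    simp
  have hg10v : g1 0 = p * ‖y‖ ^ (p - 2) * ⟪y, v⟫ := by
    rw [hg1']
    simp only
    rw [hconv 0 (p/2-1), show 2*(p/2-1) = p - 2 by ring]
    simp [hb]
  rw [hg1v, hg0v, hg10v]
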